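/- The relation on states of the non-atomic walk defined by s ≤ s' iff H̃(s, s̄') ≤ H̃(s', s̄) is transitive; consequently there exists a 'hidden' state s such that H̃(s, s̄') ≤ H̃(s', s̄) for all states s'. -/

import Mathlib

open Finset

/-- State space of the non-atomic walk: original vertices plus directed intermediate states. -/
def NAState (V : Type*) (G : SimpleGraph V) : Type _ :=
  V ⊕ {p : V × V // G.Adj p.1 p.2}

namespace NAState

variable {V : Type*} {G : SimpleGraph V}

/-- Original-vertex state. -/
def orig (v : V) : NAState V G := Sum.inl v

/-- Intermediate state `s_{ab}`, directed from `a` to `b`. -/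
def intm (a b : V) (h : G.Adj a b) : NAState V G := Sum.inr ⟨(a, b), h⟩

/-- Direction reversal: fixes original vertices, reverses intermediate states. -/
def bar : NAState V G → NAState V G
  | Sum.inl v => Sum.inl v
  | Sum.inr ⟨(a, b), h⟩ => Sum.inr ⟨(b, a), h.symm⟩

variable [Fintype V] [DecidableRel G.Adj]

/-- The number `d_s` of adjacent states of a state. -/
def asDeg : NAState V G → ℝ
  | Sum.inl v => (G.degree v : ℝ)
  | Sum.inr _ => 1

/-- Sum of `f` over the adjacent states `N_as(s)` of a state. -/
def asSum (f : NAState V G → ℝ) : NAState V G → ℝ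
  | Sum.inl v => ∑ w ∈ (G.neighborFinset v).attach,
      f (Sum.inr ⟨(v, w.1), (G.mem_neighborFinset _ _).mp w.2⟩)
  | Sum.inr ⟨(_, b), _⟩ => f (Sum.inl b)

end NAState

section Aux

set_option linter.unusedSectionVars false

variable {V : Type*} {G : SimpleGraph V}

/-- The directed-edge type. -/
abbrev NAE (V : Type*) (G : SimpleGraph V) := {p : V × V // G.Adj p.1 p.2}

variable [Fintype V] [DecidableEq V] [DecidableRel G.Adj]

instance : Fintype (NAState V G) := inferInstanceAs (Fintype (V ⊕ NAE V G))
instance : DecidableEq (NAState V G) := inferInstanceAs (DecidableEq (V ⊕ NAE V G))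

lemma bar_bar (s : NAState V G) : s.bar.bar = s := by
  rcases s with v | ⟨⟨a, b⟩, h⟩ <;> rfl

lemma asDeg_bar (s : NAState V G) : s.bar.asDeg = s.asDeg := by
  rcases s with v | ⟨⟨a, b⟩, h⟩ <;> rfl

lemma asDeg_nonneg (s : NAState V G) : 0 ≤ s.asDeg := by
  rcases s with v | ⟨⟨a, b⟩, h⟩
  · exact Nat.cast_nonneg _
  · exact zero_le_one

def barEquiv : NAState V G ≃ NAState V G :=
  ⟨NAState.bar, NAState.bar, bar_bar, bar_bar⟩

lemma sum_bar (F : NAState V G → ℝ) : ∑ s : NAState V G, F s.bar = ∑ s, F s :=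
  Fintype.sum_equiv barEquiv _ _ (fun _ => rfl)

lemma sum_na (F : NAState V G → ℝ) :
    ∑ s : NAState V G, F s = ∑ v, F (Sum.inl v) + ∑ e : NAE V G, F (Sum.inr e) :=
  Fintype.sum_sum_type F

def eswap : NAE V G ≃ NAE V G where
  toFun e := ⟨(e.1.2, e.1.1), e.2.symm⟩
  invFun e := ⟨(e.1.2, e.1.1), e.2.symm⟩
  left_inv e := rfl
  right_inv e := rfl

lemma sum_eswap (F : NAE V G → ℝ) : ∑ e, F (eswap e) = ∑ e, F e :=
  Fintype.sum_equiv eswap _ _ (fun _ => rfl)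

def nEquiv : (Σ v : V, {w // w ∈ G.neighborFinset v}) ≃ NAE V G where
  toFun x := ⟨(x.1, x.2.1), (G.mem_neighborFinset _ _).mp x.2.2⟩
  invFun e := ⟨e.1.1, ⟨e.1.2, (G.mem_neighborFinset _ _).mpr e.2⟩⟩
  left_inv x := rfl
  right_inv e := rfl

lemma sum_neighbors (F : NAE V G → ℝ) :
    ∑ v, ∑ w ∈ (G.neighborFinset v).attach,
        F ⟨(v, w.1), (G.mem_neighborFinset _ _).mp w.2⟩
      = ∑ e : NAE V G, F e := by
  rw [← Fintype.sum_equiv (nEquiv (G := G))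
    (fun x : (Σ v : V, {w // w ∈ G.neighborFinset v}) =>
      F ⟨(x.1, x.2.1), (G.mem_neighborFinset _ _).mp x.2.2⟩)
    (fun e : NAE V G => F e) (fun x => rfl)]
  rw [← Finset.univ_sigma_univ, Finset.sum_sigma]
  refine Finset.sum_congr rfl fun v _ => ?_
  rw [Finset.univ_eq_attach]

lemma sum_fst (F : V → ℝ) :
    ∑ e : NAE V G, F e.1.1 = ∑ v, (G.degree v : ℝ) * F v := by
  rw [← sum_neighbors (G := G) (fun e => F e.1.1)]
  refine Finset.sum_congr rfl fun v _ => ?_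
  show ∑ _w ∈ (G.neighborFinset v).attach, F v = _
  rw [Finset.sum_const, Finset.card_attach, nsmul_eq_mul]
  rfl

lemma sum_snd (F : V → ℝ) :
    ∑ e : NAE V G, F e.1.2 = ∑ v, (G.degree v : ℝ) * F v := by
  have h : ∑ e : NAE V G, F e.1.2 = ∑ e : NAE V G, F (eswap e).1.1 := rfl
  rw [h, sum_eswap (G := G) (fun e => F e.1.1), sum_fst]

lemma stationarity (f : NAState V G → ℝ) :
    ∑ s : NAState V G, NAState.asSum f s = ∑ s : NAState V G, s.asDeg * f s := by
  rw [sum_na, sum_na (fun s => s.asDeg * f s)]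
  have h1 : ∑ v, NAState.asSum f (Sum.inl v) = ∑ e : NAE V G, f (Sum.inr e) :=
    sum_neighbors (G := G) (fun e => f (Sum.inr e))
  have h2 : ∑ e : NAE V G, NAState.asSum f (Sum.inr e)
      = ∑ v, (G.degree v : ℝ) * f (Sum.inl v) :=
    sum_snd (fun b => f (Sum.inl b))
  have h3 : ∑ e : NAE V G, NAState.asDeg (G := G) (Sum.inr e) * f (Sum.inr e)
      = ∑ e : NAE V G, f (Sum.inr e) := by
    simp [NAState.asDeg]
  have h4 : ∑ v, NAState.asDeg (G := G) (Sum.inl v) * f (Sum.inl v)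
      = ∑ v, (G.degree v : ℝ) * f (Sum.inl v) := rfl
  rw [h1, h2, h3, h4, add_comm]

lemma adjoint (f g : NAState V G → ℝ) :
    ∑ s : NAState V G, NAState.asSum f s * g s
      = ∑ s : NAState V G, NAState.asSum (fun u => g u.bar) s * f s.bar := by
  rw [sum_na, sum_na]
  have t1 : ∑ v, NAState.asSum f (Sum.inl v) * g (Sum.inl v)
      = ∑ e : NAE V G, f (Sum.inr e) * g (Sum.inl e.1.1) := by
    rw [← sum_neighbors (G := G) (fun e => f (Sum.inr e) * g (Sum.inl e.1.1))]
    exact Finset.sum_congr rfl fun v _ => Finset.sum_mul _ _ _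
  have t2 : ∑ e : NAE V G, NAState.asSum f (Sum.inr e) * g (Sum.inr e)
      = ∑ e : NAE V G, f (Sum.inl e.1.2) * g (Sum.inr e) := rfl
  have t1' : ∑ v, NAState.asSum (fun u => g u.bar) (Sum.inl v) * f (NAState.bar (Sum.inl v))
      = ∑ e : NAE V G, g (Sum.inr (eswap e)) * f (Sum.inl e.1.1) := by
    rw [← sum_neighbors (G := G) (fun e => g (Sum.inr (eswap e)) * f (Sum.inl e.1.1))]
    exact Finset.sum_congr rfl fun v _ => Finset.sum_mul _ _ _
  have t2' : ∑ e : NAE V G, NAState.asSum (fun u => g u.bar) (Sum.inr e) * f (NAState.bar (Sum.inr e))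
      = ∑ e : NAE V G, g (Sum.inl e.1.2) * f (Sum.inr (eswap e)) := rfl
  rw [t1, t2, t1', t2']
  have u1 : ∑ e : NAE V G, g (Sum.inr (eswap e)) * f (Sum.inl e.1.1)
      = ∑ e : NAE V G, g (Sum.inr e) * f (Sum.inl e.1.2) :=
    sum_eswap (G := G) (fun e => g (Sum.inr e) * f (Sum.inl e.1.2))
  have u2 : ∑ e : NAE V G, g (Sum.inl e.1.2) * f (Sum.inr (eswap e))
      = ∑ e : NAE V G, g (Sum.inl e.1.1) * f (Sum.inr e) :=
    sum_eswap (G := G) (fun e => g (Sum.inl e.1.1) * f (Sum.inr e))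
  rw [u1, u2]
  rw [add_comm]
  congr 1
  · exact Finset.sum_congr rfl fun e _ => mul_comm _ _
  · exact Finset.sum_congr rfl fun e _ => mul_comm _ _

end Aux

theorem stmt6 {V : Type*} [Fintype V] [DecidableEq V] (G : SimpleGraph V)
    [DecidableRel G.Adj] (hconn : G.Connected)
    (Ht : NAState V G → NAState V G → ℝ)
    (hHt0 : ∀ s, Ht s s = 0)
    (hHtorig : ∀ (v : V) (s : NAState V G), NAState.orig v ≠ s →
      Ht (NAState.orig v) s =
        1 + (1 / (G.degree v : ℝ)) * NAState.asSum (fun z => Ht z s) (NAState.orig v))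
    (hHtintm : ∀ (a b : V) (h : G.Adj a b) (s : NAState V G), NAState.intm a b h ≠ s →
      Ht (NAState.intm a b h) s = 1 + Ht (NAState.orig b) s) :
    (∀ x y z : NAState V G,
        Ht x y.bar ≤ Ht y x.bar → Ht y z.bar ≤ Ht z y.bar → Ht x z.bar ≤ Ht z x.bar) ∧
      ∃ s : NAState V G, ∀ s' : NAState V G, Ht s s'.bar ≤ Ht s' s.bar := by
  classical
  -- multiplied recurrence
  have L1 : ∀ (t s : NAState V G), s ≠ t →
      s.asDeg * Ht s t = s.asDeg + NAState.asSum (fun z => Ht z t) s := by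
    intro t s hst
    rcases s with v | ⟨⟨a, b⟩, h⟩
    · have hrec := hHtorig v t hst
      simp only [NAState.orig] at hrec
      by_cases hd : G.degree v = 0
      · have hN : G.neighborFinset v = ∅ := Finset.card_eq_zero.mp hd
        have hA : NAState.asSum (fun z => Ht z t) (Sum.inl v) = 0 :=
          Finset.sum_eq_zero fun w _ => absurd w.2 (by simp [hN])
        show ((G.degree v : ℝ)) * Ht (Sum.inl v) t = (G.degree v : ℝ) + _
        rw [hA, hd]
        simp
      · have hd' : (G.degree v : ℝ) ≠ 0 := Nat.cast_ne_zero.mpr hd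
        show ((G.degree v : ℝ)) * Ht (Sum.inl v) t
          = (G.degree v : ℝ) + NAState.asSum (fun z => Ht z t) (Sum.inl v)
        rw [hrec]
        field_simp
    · have hrec := hHtintm a b h t hst
      simp only [NAState.intm, NAState.orig] at hrec
      show (1 : ℝ) * Ht (Sum.inr ⟨(a, b), h⟩) t = 1 + Ht (Sum.inl b) t
      rw [one_mul, hrec]
  set W : ℝ := ∑ s : NAState V G, s.asDeg with hWdef
  -- "return time" identity
  have Lret : ∀ t : NAState V G,
      NAState.asSum (fun z => Ht z t) t = W - t.asDeg := by
    intro t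
    have hstat := stationarity (G := G) (fun s => Ht s t)
    have h1 : ∑ s : NAState V G, NAState.asSum (fun z => Ht z t) s
        = NAState.asSum (fun z => Ht z t) t
          + ∑ s ∈ (univ : Finset (NAState V G)).erase t,
              NAState.asSum (fun z => Ht z t) s :=
      (Finset.add_sum_erase univ _ (mem_univ t)).symm
    have h2 : ∑ s ∈ (univ : Finset (NAState V G)).erase t,
        NAState.asSum (fun z => Ht z t) s
        = ∑ s ∈ (univ : Finset (NAState V G)).erase t, (s.asDeg * Ht s t - s.asDeg) := by
      refine Finset.sum_congr rfl fun s hs => ?_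
      have := L1 t s (Finset.ne_of_mem_erase hs)
      linarith
    have h3 : ∑ s : NAState V G, s.asDeg * Ht s t
        = ∑ s ∈ (univ : Finset (NAState V G)).erase t, s.asDeg * Ht s t := by
      rw [← Finset.add_sum_erase univ (fun s : NAState V G => s.asDeg * Ht s t) (mem_univ t),
        hHt0 t, mul_zero, zero_add]
    have h4 : ∑ s ∈ (univ : Finset (NAState V G)).erase t, (s.asDeg * Ht s t - s.asDeg)
        = ∑ s ∈ (univ : Finset (NAState V G)).erase t, s.asDeg * Ht s t
          - ∑ s ∈ (univ : Finset (NAState V G)).erase t, s.asDeg :=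
      Finset.sum_sub_distrib _ _
    have h5 : ∑ s ∈ (univ : Finset (NAState V G)).erase t, NAState.asDeg s = W - t.asDeg := by
      have := (Finset.add_sum_erase univ (fun s : NAState V G => s.asDeg) (mem_univ t)).symm
      rw [hWdef]
      linarith [this]
    rw [h1, h2, h4, h5] at hstat
    rw [h3] at hstat
    linarith
  -- Laplacian identity
  have LA : ∀ (t s : NAState V G),
      s.asDeg * Ht s t - NAState.asSum (fun z => Ht z t) s
        = s.asDeg - (if s = t then W else 0) := by
    intro t s
    by_cases h : s = t
    · subst h
      rw [hHt0 s, mul_zero, Lret s, if_pos rfl]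
      ring
    · rw [if_neg h]
      have := L1 t s h
      linarith
  -- the Q computation
  have QE : ∀ x y : NAState V G,
      (∑ s : NAState V G, s.asDeg * Ht s y.bar * Ht s.bar x.bar)
        - ∑ s : NAState V G, NAState.asSum (fun z => Ht z y.bar) s * Ht s.bar x.bar
      = (∑ s : NAState V G, s.asDeg * Ht s.bar x.bar) - W * Ht y x.bar := by
    intro x y
    have step : ∑ s : NAState V G,
        (s.asDeg * Ht s y.bar - NAState.asSum (fun z => Ht z y.bar) s) * Ht s.bar x.bar
        = ∑ s : NAState V G,
            (s.asDeg * Ht s.bar x.bar - if s = y.bar then W * Ht s.bar x.bar else 0) := by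
      refine Finset.sum_congr rfl fun s _ => ?_
      rw [LA y.bar s]
      by_cases h : s = y.bar <;> simp [h] <;> ring
    have lhs_eq : ∑ s : NAState V G,
        (s.asDeg * Ht s y.bar - NAState.asSum (fun z => Ht z y.bar) s) * Ht s.bar x.bar
        = (∑ s : NAState V G, s.asDeg * Ht s y.bar * Ht s.bar x.bar)
          - ∑ s : NAState V G, NAState.asSum (fun z => Ht z y.bar) s * Ht s.bar x.bar := by
      rw [← Finset.sum_sub_distrib]
      exact Finset.sum_congr rfl fun s _ => by ring
    have rhs_eq : ∑ s : NAState V G,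
        (s.asDeg * Ht s.bar x.bar - if s = y.bar then W * Ht s.bar x.bar else 0)
        = (∑ s : NAState V G, s.asDeg * Ht s.bar x.bar) - W * Ht y x.bar := by
      rw [Finset.sum_sub_distrib]
      congr 1
      rw [Finset.sum_ite_eq' univ y.bar (fun s : NAState V G => W * Ht s.bar x.bar)]
      simp [bar_bar]
    rw [← lhs_eq, step, rhs_eq]
  -- adjointness application
  have TA : ∀ x y : NAState V G,
      ∑ s : NAState V G, NAState.asSum (fun z => Ht z y.bar) s * Ht s.bar x.bar
        = ∑ s : NAState V G, NAState.asSum (fun z => Ht z x.bar) s * Ht s.bar y.bar := by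
    intro x y
    have h := adjoint (G := G) (fun z => Ht z y.bar) (fun s => Ht s.bar x.bar)
    simpa [bar_bar] using h
  have cross_symm : ∀ x y : NAState V G,
      ∑ s : NAState V G, s.asDeg * Ht s y.bar * Ht s.bar x.bar
        = ∑ s : NAState V G, s.asDeg * Ht s x.bar * Ht s.bar y.bar := by
    intro x y
    rw [← sum_bar (G := G) (fun s => s.asDeg * Ht s y.bar * Ht s.bar x.bar)]
    refine Finset.sum_congr rfl fun s _ => ?_
    rw [asDeg_bar, bar_bar]
    ring
  have sbar : ∀ t : NAState V G,
      ∑ s : NAState V G, s.asDeg * Ht s.bar t = ∑ s : NAState V G, s.asDeg * Ht s t := by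
    intro t
    rw [← sum_bar (G := G) (fun s => s.asDeg * Ht s t)]
    refine Finset.sum_congr rfl fun s _ => ?_
    rw [asDeg_bar]
  set β : NAState V G → ℝ := fun t => ∑ s : NAState V G, s.asDeg * Ht s t.bar with hβ
  have M : ∀ x y : NAState V G,
      β x - W * Ht y x.bar = β y - W * Ht x y.bar := by
    intro x y
    have e1 := QE x y
    have e2 := QE y x
    rw [TA x y] at e1
    rw [cross_symm x y] at e1
    rw [sbar x.bar] at e1
    rw [sbar y.bar] at e2
    simp only [hβ]
    linarith
  by_cases hW : W = 0
  · -- degenerate: single state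
    have hzero : ∀ s : NAState V G, s.asDeg = 0 := by
      intro s
      exact (Finset.sum_eq_zero_iff_of_nonneg
        (fun s _ => asDeg_nonneg (G := G) s)).mp (hWdef.symm.trans hW) s (mem_univ s)
    have hE : IsEmpty (NAE V G) := ⟨fun e => by
      have := hzero (Sum.inr e)
      simp [NAState.asDeg] at this⟩
    have hVsub : ∀ u v : V, u = v := by
      intro u v
      obtain ⟨p⟩ := hconn.preconnected u v
      cases p with
      | nil => rfl
      | cons h q => exact (hE.false ⟨(_, _), h⟩).elim
    have hss : ∀ s s' : NAState V G, s = s' := by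
      intro s s'
      rcases s with v | e
      · rcases s' with v' | e'
        · exact congrArg Sum.inl (hVsub v v')
        · exact (hE.false e').elim
      · exact (hE.false e).elim
    have key : ∀ s s' : NAState V G, Ht s s'.bar ≤ Ht s' s.bar := by
      intro s s'
      rw [hss s' s]
    refine ⟨fun x y z _ _ => key x z, ?_⟩
    have : Nonempty V := hconn.nonempty
    exact ⟨Sum.inl (Classical.arbitrary V), fun s' => key _ s'⟩
  · have hWpos : 0 < W :=
      lt_of_le_of_ne (Finset.sum_nonneg fun s _ => asDeg_nonneg (G := G) s) (Ne.symm hW)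
    have key : ∀ x y : NAState V G, Ht x y.bar ≤ Ht y x.bar ↔ β y ≤ β x := by
      intro x y
      have h := M x y
      constructor
      · intro hxy
        have := mul_le_mul_of_nonneg_left hxy (le_of_lt hWpos)
        linarith
      · intro hb
        have h2 : W * Ht x y.bar ≤ W * Ht y x.bar := by linarith
        exact (mul_le_mul_iff_right₀ hWpos).mp h2
    constructor
    · intro x y z h1 h2
      exact (key x z).mpr (le_trans ((key y z).mp h2) ((key x y).mp h1))
    · have : Nonempty (NAState V G) := ⟨Sum.inl hconn.nonempty.some⟩
      obtain ⟨s, -, hs⟩ := Finset.exists_max_image (univ : Finset (NAState V G)) β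
        ⟨Classical.arbitrary _, mem_univ _⟩
      exact ⟨s, fun s' => (key s s').mpr (hs s' (mem_univ _))⟩
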